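/- Let ρ be a positive semidefinite n×n complex matrix and let φ ∈ ℂⁿ be a nonzero vector in the range of ρ. Then Λ := sup { λ ∈ ℝ, λ ≥ 0 : ρ − λ φφ† is positive semidefinite } is finite and strictly positive, the matrix ρ − Λ φφ† is positive semidefinite, and rank(ρ − Λ φφ†) = rank(ρ) − 1. -/

import Mathlib

open Matrix ComplexOrder

noncomputable section

/-- The rank-one outer product `v v†`. -/
def outer {n : Type*} (v : n → ℂ) : Matrix n n ℂ := Matrix.vecMulVec v (star v)

private lemma outer_mulVec {n : ℕ} (v x : Fin n → ℂ) :
    (outer v) *ᵥ x = (star v ⬝ᵥ x) • v := by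
  ext i
  simp [outer, vecMulVec_apply, mulVec, dotProduct, Finset.mul_sum, mul_comm, mul_assoc,
    mul_left_comm]

private lemma dot_cs {n : ℕ} (u v : Fin n → ℂ) :
    ‖star u ⬝ᵥ v‖ * ‖star v ⬝ᵥ u‖ ≤ (star u ⬝ᵥ u).re * (star v ⬝ᵥ v).re := by
  have := inner_mul_inner_self_le (𝕜 := ℂ)
    ((WithLp.equiv 2 _).symm u : EuclideanSpace ℂ (Fin n)) ((WithLp.equiv 2 _).symm v)
  simp only [WithLp.equiv_symm_apply, EuclideanSpace.inner_toLp_toLp, RCLike.re_to_complex] at this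
  rw [dotProduct_comm v, dotProduct_comm u, dotProduct_comm u, dotProduct_comm v] at this
  exact this

private lemma star_dot {n : ℕ} (u v : Fin n → ℂ) :
    star v ⬝ᵥ u = star (star u ⬝ᵥ v) := by
  simp [dotProduct, Finset.sum_comm, map_sum, mul_comm]

/-- Projector-subtraction lemma: for a positive semidefinite `ρ` and a nonzero vector `φ`
in its range, the maximal `λ ≥ 0` with `ρ - λ φφ†` positive semidefinite is finite and
strictly positive, the subtracted matrix is positive semidefinite, and its rank is
`rank ρ - 1`. -/
theorem projector_subtraction (n : ℕ) (ρ : Matrix (Fin n) (Fin n) ℂ)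
    (hpos : ρ.PosSemidef) (φ : Fin n → ℂ) (hφ : φ ≠ 0)
    (hrange : ∃ ψ, ρ.mulVec ψ = φ) :
    BddAbove {l : ℝ | 0 ≤ l ∧ (ρ - (l : ℂ) • outer φ).PosSemidef} ∧
    0 < sSup {l : ℝ | 0 ≤ l ∧ (ρ - (l : ℂ) • outer φ).PosSemidef} ∧
    (ρ - ((sSup {l : ℝ | 0 ≤ l ∧ (ρ - (l : ℂ) • outer φ).PosSemidef} : ℝ) : ℂ) •
        outer φ).PosSemidef ∧
    (ρ - ((sSup {l : ℝ | 0 ≤ l ∧ (ρ - (l : ℂ) • outer φ).PosSemidef} : ℝ) : ℂ) •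
        outer φ).rank = ρ.rank - 1 := by
  classical
  obtain ⟨ψ, hψ⟩ := hrange
  set S := {l : ℝ | 0 ≤ l ∧ (ρ - (l : ℂ) • outer φ).PosSemidef} with hSdef
  set c : ℂ := star ψ ⬝ᵥ ρ *ᵥ ψ with hc
  have hc0 : 0 ≤ c := hpos.dotProduct_mulVec_nonneg ψ
  have hcne : c ≠ 0 := fun h => hφ (hψ ▸ (hpos.dotProduct_mulVec_zero_iff ψ).mp h)
  have him : c.im = 0 := ((Complex.le_def.mp hc0).2).symm
  have hcre : 0 < c.re := by
    rcases lt_or_eq_of_le (Complex.le_def.mp hc0).1 with h | h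
    · simpa using h
    · exact absurd (Complex.ext h.symm him) hcne
  have hcreal : c = (c.re : ℂ) := by
    apply Complex.ext <;> simp [him]
  set Λ₀ : ℝ := 1 / c.re with hΛ₀
  have hΛpos : 0 < Λ₀ := by positivity
  -- dot products with φ
  have hφx : ∀ x, star φ ⬝ᵥ x = star ψ ⬝ᵥ ρ *ᵥ x := by
    intro x
    rw [← hψ, star_mulVec, hpos.1.eq, ← dotProduct_mulVec]
  have hφψ : star φ ⬝ᵥ ψ = c := hφx ψ
  have hψφ : star ψ ⬝ᵥ φ = c := by rw [← hψ]
  -- quadratic form of `ρ - l • outer φ`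
  have hform : ∀ (l : ℝ) (x : Fin n → ℂ),
      star x ⬝ᵥ (ρ - (l : ℂ) • outer φ) *ᵥ x
        = star x ⬝ᵥ ρ *ᵥ x - (l : ℂ) * ((star φ ⬝ᵥ x) * star (star φ ⬝ᵥ x)) := by
    intro l x
    rw [sub_mulVec, dotProduct_sub, smul_mulVec, outer_mulVec, dotProduct_smul,
      dotProduct_smul, ← star_dot]
    simp only [smul_eq_mul]
  -- upper bound on S
  have key2 : ∀ l ∈ S, l ≤ Λ₀ := by
    intro l hl
    have h := hl.2.dotProduct_mulVec_nonneg ψ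
    rw [hform l ψ, hφψ, ← hc] at h
    rw [hcreal, Complex.star_def, Complex.conj_ofReal] at h
    have h'' : (0 : ℂ) ≤ ((c.re - l * (c.re * c.re) : ℝ) : ℂ) := by
      convert h using 1
      push_cast
      ring
    have hre : 0 ≤ c.re - l * (c.re * c.re) := Complex.zero_le_real.mp h''
    rw [hΛ₀, le_div_iff₀ hcre]
    nlinarith
  -- membership of Λ₀ in S
  have houter : (outer φ).IsHermitian := by
    ext i j
    simp [outer, conjTranspose_apply, vecMulVec_apply, mul_comm]
  have hherm : ∀ (l : ℝ), (ρ - (l : ℂ) • outer φ).IsHermitian := by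
    intro l
    refine hpos.1.sub ?_
    rw [IsHermitian, conjTranspose_smul, houter.eq, Complex.star_def, Complex.conj_ofReal]
  -- Cauchy-Schwarz bound: for all x, ‖star φ ⬝ᵥ x‖^2 ≤ c.re * (star x ⬝ᵥ ρ *ᵥ x).re
  obtain ⟨B, hB⟩ : ∃ B : Matrix (Fin n) (Fin n) ℂ, ρ = Bᴴ * B := by
    open scoped MatrixOrder in
    obtain ⟨B, hB⟩ := CStarAlgebra.nonneg_iff_eq_star_mul_self.mp hpos.nonneg
    exact ⟨B, hB⟩
  have hrho : ∀ w x : Fin n → ℂ,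
      star w ⬝ᵥ ρ *ᵥ x = star (B *ᵥ w) ⬝ᵥ (B *ᵥ x) := by
    intro w x
    rw [hB, ← mulVec_mulVec, dotProduct_mulVec, vecMul_conjTranspose, star_star]
  have hCS : ∀ x, ‖star φ ⬝ᵥ x‖ ^ 2 ≤ c.re * (star x ⬝ᵥ ρ *ᵥ x).re := by
    intro x
    have h1 := dot_cs (B *ᵥ ψ) (B *ᵥ x)
    have hz : star φ ⬝ᵥ x = star (B *ᵥ ψ) ⬝ᵥ (B *ᵥ x) := by rw [hφx, hrho]
    have hcu : c = star (B *ᵥ ψ) ⬝ᵥ (B *ᵥ ψ) := by rw [hc, hrho]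
    have htv : star x ⬝ᵥ ρ *ᵥ x = star (B *ᵥ x) ⬝ᵥ (B *ᵥ x) := hrho x x
    rw [← hz, ← hcu, ← htv, star_dot ((B:Matrix (Fin n) (Fin n) ℂ) *ᵥ ψ) (B *ᵥ x)] at h1
    calc ‖star φ ⬝ᵥ x‖ ^ 2 = ‖star φ ⬝ᵥ x‖ * ‖star (star φ ⬝ᵥ x)‖ := by
          rw [norm_star]; ring
      _ ≤ c.re * (star x ⬝ᵥ ρ *ᵥ x).re := by
          rw [hz]
          rw [hz] at h1
          exact h1
  have key1 : Λ₀ ∈ S := by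
    refine ⟨le_of_lt hΛpos, PosSemidef.of_dotProduct_mulVec_nonneg (hherm Λ₀) fun x => ?_⟩
    rw [hform Λ₀ x]
    have ht0 : 0 ≤ star x ⬝ᵥ ρ *ᵥ x := hpos.dotProduct_mulVec_nonneg x
    have htim : (star x ⬝ᵥ ρ *ᵥ x).im = 0 := ((Complex.le_def.mp ht0).2).symm
    have hzz : (star φ ⬝ᵥ x) * star (star φ ⬝ᵥ x) = ((‖star φ ⬝ᵥ x‖ ^ 2 : ℝ) : ℂ) := by
      rw [Complex.star_def, Complex.mul_conj]
      norm_cast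
      rw [Complex.normSq_eq_norm_sq]
    rw [hzz]
    rw [Complex.le_def]
    constructor
    · simp only [Complex.sub_re, Complex.zero_re, Complex.mul_re, Complex.ofReal_re,
        Complex.ofReal_im, Complex.zero_im, mul_zero, zero_mul, sub_zero]
      have := hCS x
      rw [hΛ₀]
      rw [div_mul_eq_mul_div, one_mul, sub_nonneg, div_le_iff₀ hcre]
      nlinarith
    · simp [htim, Complex.sub_im, Complex.mul_im, pow_two]
  -- the supremum
  have hbdd : BddAbove S := ⟨Λ₀, fun l hl => key2 l hl⟩
  have hsup : sSup S = Λ₀ :=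
    le_antisymm (csSup_le ⟨Λ₀, key1⟩ key2) (le_csSup hbdd key1)
  refine ⟨hbdd, ?_, ?_, ?_⟩
  · rw [hsup]; exact hΛpos
  · rw [hsup]; exact key1.2
  · rw [hsup]
    -- rank argument
    set σ : Matrix (Fin n) (Fin n) ℂ := ρ - (Λ₀ : ℂ) • outer φ with hσ
    have hΛc : (Λ₀ : ℂ) * c = 1 := by
      rw [hcreal, hΛ₀]
      push_cast
      field_simp
    -- kernel containment
    have hker : ∀ x, ρ *ᵥ x = 0 → σ *ᵥ x = 0 := by
      intro x hx
      have hzx : star φ ⬝ᵥ x = 0 := by rw [hφx, hx, dotProduct_zero]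
      rw [hσ, sub_mulVec, hx, smul_mulVec, outer_mulVec, hzx, zero_smul, smul_zero,
        sub_zero]
    have hkψ : σ *ᵥ ψ = 0 := by
      rw [hσ, sub_mulVec, hψ, smul_mulVec, outer_mulVec, hφψ, smul_smul, hΛc, one_smul,
        sub_self]
    set f := ρ.mulVecLin with hf
    set g := σ.mulVecLin with hg
    have hψker : ψ ∉ LinearMap.ker f := by
      simp only [LinearMap.mem_ker, hf, mulVecLin_apply, hψ]
      exact hφ
    have e1 : LinearMap.ker f ⊔ Submodule.span ℂ {ψ} ≤ LinearMap.ker g := by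
      refine sup_le (fun x hx => ?_) ?_
      · exact LinearMap.mem_ker.mpr (hker x (LinearMap.mem_ker.mp hx))
      · rw [Submodule.span_le, Set.singleton_subset_iff]
        exact LinearMap.mem_ker.mpr hkψ
    have hlt : LinearMap.ker f < LinearMap.ker f ⊔ Submodule.span ℂ {ψ} := by
      refine lt_of_le_of_ne le_sup_left fun h => ?_
      exact hψker (h ▸ Submodule.mem_sup_right (Submodule.mem_span_singleton_self ψ))
    have hk1 : Module.finrank ℂ (LinearMap.ker f) + 1 ≤ Module.finrank ℂ (LinearMap.ker g) :=
      Nat.succ_le_of_lt <| lt_of_lt_of_le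
        (Submodule.finrank_lt_finrank_of_lt hlt) (Submodule.finrank_mono e1)
    -- range containment
    have e2 : LinearMap.range f ≤ LinearMap.range g ⊔ Submodule.span ℂ {φ} := by
      rintro _ ⟨x, rfl⟩
      have : f x = g x + ((Λ₀ : ℂ) * (star φ ⬝ᵥ x)) • φ := by
        simp only [hf, hg, mulVecLin_apply, hσ, sub_mulVec, smul_mulVec, outer_mulVec,
          smul_smul]
        abel
      rw [this]
      exact Submodule.add_mem _ (Submodule.mem_sup_left ⟨x, rfl⟩)
        (Submodule.mem_sup_right (Submodule.smul_mem _ _ (Submodule.mem_span_singleton_self φ)))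
    have hr2 : Module.finrank ℂ (LinearMap.range f)
        ≤ Module.finrank ℂ (LinearMap.range g) + 1 := by
      calc Module.finrank ℂ (LinearMap.range f)
          ≤ Module.finrank ℂ ((LinearMap.range g ⊔ Submodule.span ℂ {φ} : Submodule ℂ _))
            := Submodule.finrank_mono e2
        _ ≤ Module.finrank ℂ (LinearMap.range g) + Module.finrank ℂ (Submodule.span ℂ {φ}) := by
            have := Submodule.finrank_sup_add_finrank_inf_eq
              (LinearMap.range g) (Submodule.span ℂ {φ})
            omega
        _ = Module.finrank ℂ (LinearMap.range g) + 1 := by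
            rw [finrank_span_singleton hφ]
    have hnr : Module.finrank ℂ (LinearMap.range f) + Module.finrank ℂ (LinearMap.ker f)
        = Module.finrank ℂ (Fin n → ℂ) := LinearMap.finrank_range_add_finrank_ker f
    have hnσ : Module.finrank ℂ (LinearMap.range g) + Module.finrank ℂ (LinearMap.ker g)
        = Module.finrank ℂ (Fin n → ℂ) := LinearMap.finrank_range_add_finrank_ker g
    have hrρ : ρ.rank = Module.finrank ℂ (LinearMap.range f) := rfl
    have hrσ : σ.rank = Module.finrank ℂ (LinearMap.range g) := rfl
    rw [hrσ, hrρ]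
    omega

end
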